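/- Let ω be a closed 2-form on ℝ^{2n} (so ∂_l ω_{jk} + ∂_j ω_{kl} + ∂_k ω_{lj} = 0 at every point), let β be a Riemannian metric (symmetric positive-definite bilinear form field) and define J^k_j = ω_{jl} β^{lk}, assuming J² = -1 pointwise. Then at any point where β_{ij} = δ_{ij} in the chosen coordinates, the divergence of J vanishes: ∑_l ∂_l J_j^l = 0 for every j, provided also ∂β = 0 at that point (normal coordinates). -/

import Mathlib

open Matrix
/-- Partial derivative of a scalar field on `ℝ^N` in the `l`-th coordinate direction. -/
noncomputable def pder {N : ℕ} (l : Fin N) (f : (Fin N → ℝ) → ℝ) (x : Fin N → ℝ) : ℝ :=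
  fderiv ℝ f x (Pi.single l 1)

section helpers

variable {N : ℕ}

lemma pder_const (l : Fin N) (c : ℝ) (x : Fin N → ℝ) :
    pder l (fun _ => c) x = 0 := by
  simp [pder]

lemma pder_neg (l : Fin N) (f : (Fin N → ℝ) → ℝ) (x : Fin N → ℝ) :
    pder l (fun y => -(f y)) x = -pder l f x := by
  simp [pder, fderiv_neg]

lemma pder_mul (l : Fin N) (f g : (Fin N → ℝ) → ℝ) (x : Fin N → ℝ)
    (hf : DifferentiableAt ℝ f x) (hg : DifferentiableAt ℝ g x) :
    pder l (fun y => f y * g y) x = pder l f x * g x + f x * pder l g x := by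
  simp only [pder, fderiv_fun_mul hf hg, ContinuousLinearMap.add_apply,
    ContinuousLinearMap.smul_apply, smul_eq_mul]
  ring

lemma pder_sum {ι : Type*} (s : Finset ι) (l : Fin N) (f : ι → (Fin N → ℝ) → ℝ)
    (x : Fin N → ℝ) (h : ∀ i ∈ s, DifferentiableAt ℝ (f i) x) :
    pder l (fun y => ∑ i ∈ s, f i y) x = ∑ i ∈ s, pder l (f i) x := by
  simp only [pder, fderiv_fun_sum h, ContinuousLinearMap.sum_apply]

lemma diff_finset_prod {ι : Type*} (s : Finset ι) (f : ι → (Fin N → ℝ) → ℝ)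
    (h : ∀ i ∈ s, Differentiable ℝ (f i)) :
    Differentiable ℝ (fun x => ∏ i ∈ s, f i x) := by
  classical
  refine Finset.induction_on s (by simp [differentiable_const]) ?_ h
  intro a t hni ih h
  simp only [Finset.prod_insert hni]
  exact (h a (Finset.mem_insert_self a t)).mul
    (ih fun i hi => h i (Finset.mem_insert_of_mem hi))

lemma diff_det (A : (Fin N → ℝ) → Matrix (Fin N) (Fin N) ℝ)
    (h : ∀ i j, Differentiable ℝ (fun x => A x i j)) :
    Differentiable ℝ (fun x => (A x).det) := by
  have : (fun x => (A x).det)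
      = fun x => ∑ σ : Equiv.Perm (Fin N), (Equiv.Perm.sign σ : ℝ) * ∏ i, A x (σ i) i := by
    funext x
    rw [Matrix.det_apply']
  rw [this]
  apply Differentiable.fun_sum
  intro σ _
  exact ((diff_finset_prod Finset.univ (fun i x => A x (σ i) i)
    (fun i _ => h (σ i) i))).const_mul _

end helpers

/-- Divergence-free property of the almost complex structure `J = ω β⁻¹` at a point where
`β = δ` and `∂β = 0`, given `dω = 0` and `J² = -1`. -/
theorem stmt_3 (n : ℕ) (x₀ : Fin (2 * n) → ℝ)
    (om β J : (Fin (2 * n) → ℝ) → Matrix (Fin (2 * n)) (Fin (2 * n)) ℝ)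
    (homdiff : ∀ i j, Differentiable ℝ (fun x => om x i j))
    (hβdiff : ∀ i j, Differentiable ℝ (fun x => β x i j))
    (hanti : ∀ x, (om x)ᵀ = -(om x))
    (hclosed : ∀ x (l j k : Fin (2 * n)),
      pder l (fun y => om y j k) x + pder j (fun y => om y k l) x
        + pder k (fun y => om y l j) x = 0)
    (hβpos : ∀ x, (β x).PosDef)
    (hβ0 : β x₀ = 1)
    (hdβ : ∀ (l i j : Fin (2 * n)), pder l (fun y => β y i j) x₀ = 0)
    (hJ : ∀ x, J x = om x * (β x)⁻¹)
    (hJ2 : ∀ x, J x * J x = -1) :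
    ∀ j : Fin (2 * n), ∑ l, pder l (fun y => J y j l) x₀ = 0 := by
  classical
  set D : Fin (2 * n) → Fin (2 * n) → Fin (2 * n) → ℝ :=
    fun a j k => pder a (fun y => om y j k) x₀ with hD
  set W : Fin (2 * n) → Fin (2 * n) → ℝ := fun j k => om x₀ j k with hW
  -- determinant of β never vanishes
  have hdet : ∀ x, (β x).det ≠ 0 := fun x => (hβpos x).det_pos.ne'
  -- entries of β⁻¹ are differentiable
  have hinvdiff : ∀ i j, Differentiable ℝ (fun x => (β x)⁻¹ i j) := by
    intro i j
    have heq : (fun x => (β x)⁻¹ i j)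
        = fun x => ((β x).det)⁻¹ * ((β x).updateRow j (Pi.single i 1)).det := by
      funext x
      rw [Matrix.inv_def, Matrix.smul_apply, Matrix.adjugate_apply, Ring.inverse_eq_inv,
        smul_eq_mul]
    rw [heq]
    have h1 : Differentiable ℝ (fun x => ((β x).det)⁻¹) :=
      (diff_det β hβdiff).inv hdet
    have h2 : Differentiable ℝ (fun x => ((β x).updateRow j (Pi.single i 1)).det) := by
      apply diff_det
      intro k l
      by_cases hk : k = j
      · subst hk
        simp only [Matrix.updateRow_self]
        exact differentiable_const _
      · simp only [Matrix.updateRow_apply, if_neg hk]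
        exact hβdiff k l
    exact h1.mul h2
  -- entries of J are differentiable
  have hJdiff : ∀ i j, Differentiable ℝ (fun x => J x i j) := by
    intro i j
    have heq : (fun x => J x i j) = fun x => ∑ m, om x i m * (β x)⁻¹ m j := by
      funext x
      rw [hJ x, Matrix.mul_apply]
    rw [heq]
    apply Differentiable.fun_sum
    intro m _
    exact (homdiff i m).mul (hinvdiff m j)
  -- J x₀ = om x₀
  have hJ0 : J x₀ = om x₀ := by rw [hJ, hβ0, inv_one, mul_one]
  -- J * β = om everywhere
  have hJβ : ∀ x, J x * β x = om x := by
    intro x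
    rw [hJ x, Matrix.mul_assoc, Matrix.nonsing_inv_mul _ (isUnit_iff_ne_zero.mpr (hdet x)),
      Matrix.mul_one]
  -- derivatives of J at x₀ equal derivatives of om
  have hDJ : ∀ (a j k : Fin (2 * n)), pder a (fun y => J y j k) x₀ = D a j k := by
    intro a j k
    have heq : (fun y => om y j k) = fun y => ∑ m, J y j m * β y m k := by
      funext y
      rw [← hJβ y, Matrix.mul_apply]
    have : D a j k = ∑ m, (pder a (fun y => J y j m) x₀ * β x₀ m k
        + J x₀ j m * pder a (fun y => β y m k) x₀) := by
      rw [hD]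
      simp only [heq]
      rw [pder_sum _ a _ x₀ (fun m _ => ((hJdiff j m).differentiableAt).fun_mul
        ((hβdiff m k).differentiableAt))]
      exact Finset.sum_congr rfl fun m _ =>
        pder_mul a _ _ x₀ ((hJdiff j m).differentiableAt) ((hβdiff m k).differentiableAt)
    rw [this]
    rw [Finset.sum_congr rfl (fun m _ => by rw [hdβ a m k, hβ0, mul_zero, add_zero])]
    simp [Matrix.one_apply, Finset.sum_ite_eq]
  -- antisymmetry of W and D
  have hWanti : ∀ j k, W k j = -W j k := by
    intro j k
    have := congrFun (congrFun (hanti x₀) j) k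
    simpa [Matrix.transpose_apply, Matrix.neg_apply] using this
  have hDanti : ∀ a j k, D a k j = -D a j k := by
    intro a j k
    have heq : (fun y => om y k j) = fun y => -(om y j k) := by
      funext y
      have := congrFun (congrFun (hanti y) j) k
      simpa [Matrix.transpose_apply, Matrix.neg_apply] using this
    rw [hD]
    simp only [heq]
    rw [pder_neg]
  -- W * W = -1
  have hWW : ∀ j k, ∑ m, W j m * W m k = -(1 : Matrix (Fin (2*n)) (Fin (2*n)) ℝ) j k := by
    intro j k
    have := hJ2 x₀
    rw [hJ0] at this
    have := congrFun (congrFun this j) k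
    rw [Matrix.mul_apply] at this
    simpa using this
  -- differentiated J² = -1 relation at x₀
  have hF5 : ∀ a j k, ∑ m, (D a j m * W m k + W j m * D a m k) = 0 := by
    intro a j k
    have heq : (fun y => (-1 : Matrix (Fin (2*n)) (Fin (2*n)) ℝ) j k)
        = fun y => ∑ m, J y j m * J y m k := by
      funext y
      rw [← hJ2 y, Matrix.mul_apply]
    have h0 : (0:ℝ) = pder a (fun y => ∑ m, J y j m * J y m k) x₀ := by
      rw [← heq, pder_const]
    rw [pder_sum _ a _ x₀ (fun m _ => ((hJdiff j m).differentiableAt).fun_mul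
      ((hJdiff m k).differentiableAt))] at h0
    rw [Finset.sum_congr rfl (fun m _ =>
      pder_mul a _ _ x₀ ((hJdiff j m).differentiableAt) ((hJdiff m k).differentiableAt))] at h0
    rw [Finset.sum_congr rfl (fun m _ => by rw [hDJ a j m, hDJ a m k, hJ0])] at h0
    exact h0.symm
  -- closedness at x₀
  have hC : ∀ l j k, D l j k + D j k l + D k l j = 0 := fun l j k => hclosed x₀ l j k
  -- trace fact: ∑_{j,m} W j m * D a j m = 0
  have hT : ∀ a, ∑ j, ∑ m, W j m * D a j m = 0 := by
    intro a
    have h1 : ∑ j, ∑ m, (D a j m * W m j + W j m * D a m j) = 0 := by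
      rw [Finset.sum_congr rfl (fun j _ => hF5 a j j)]
      simp
    have h2 : ∑ j, ∑ m, W j m * D a m j = ∑ j, ∑ m, D a j m * W m j := by
      rw [Finset.sum_comm]
      exact Finset.sum_congr rfl fun m _ => Finset.sum_congr rfl fun j _ => mul_comm _ _
    simp only [Finset.sum_add_distrib] at h1
    rw [h2] at h1
    have h3 : ∑ j, ∑ m, D a j m * W m j = 0 := by linarith
    calc ∑ j, ∑ m, W j m * D a j m
        = -∑ j, ∑ m, D a j m * W m j := by
          rw [← Finset.sum_neg_distrib]
          refine Finset.sum_congr rfl fun j _ => ?_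
          rw [← Finset.sum_neg_distrib]
          refine Finset.sum_congr rfl fun m _ => ?_
          rw [hWanti j m]
          ring
      _ = 0 := by rw [h3, neg_zero]
  -- V fact: ∑_{a,m} W a m * D a m k = 0
  have hV : ∀ k, ∑ a, ∑ m, W a m * D a m k = 0 := by
    intro k
    have hsplit : ∀ a m, W a m * D a m k
        = -(W a m * D m k a) - (W a m * D k a m) := by
      intro a m
      have h0 : D a m k = -(D m k a) - D k a m := by have := hC a m k; linarith
      rw [h0]; ring
    have h1 : ∑ a, ∑ m, W a m * D a m k
        = -(∑ a, ∑ m, W a m * D m k a) - ∑ a, ∑ m, W a m * D k a m := by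
      rw [Finset.sum_congr rfl (fun a _ => Finset.sum_congr rfl fun m _ => hsplit a m)]
      simp [Finset.sum_sub_distrib, Finset.sum_neg_distrib]
    have h2 : ∑ a, ∑ m, W a m * D k a m = 0 := hT k
    have h3 : ∑ a, ∑ m, W a m * D m k a = ∑ a, ∑ m, W a m * D a m k := by
      rw [Finset.sum_comm]
      refine Finset.sum_congr rfl fun i _ => Finset.sum_congr rfl fun p _ => ?_
      rw [hWanti i p, hDanti i p k]
      ring
    rw [h2, h3, sub_zero] at h1
    linarith
  -- U fact: ∑_m (∑_a D a a m) * W m k = 0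
  have hUW : ∀ k, ∑ m, (∑ a, D a a m) * W m k = 0 := by
    intro k
    have h1 : ∑ a, ∑ m, (D a a m * W m k + W a m * D a m k) = 0 := by
      rw [Finset.sum_congr rfl (fun a _ => hF5 a a k)]
      simp
    simp only [Finset.sum_add_distrib] at h1
    rw [hV k] at h1
    rw [Finset.sum_comm] at h1
    simp only [← Finset.sum_mul] at h1
    linarith
  -- conclude U = 0
  have hU : ∀ j, ∑ a, D a a j = 0 := by
    intro j
    have h1 : ∑ k, (∑ m, (∑ a, D a a m) * W m k) * W k j = 0 := by
      rw [Finset.sum_congr rfl (fun k _ => by rw [hUW k, zero_mul])]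
      simp
    rw [Finset.sum_congr rfl (fun k _ => Finset.sum_mul _ _ _)] at h1
    rw [Finset.sum_comm] at h1
    have h2 : ∀ m, ∑ k, (∑ a, D a a m) * W m k * W k j
        = (∑ a, D a a m) * (-(1 : Matrix (Fin (2*n)) (Fin (2*n)) ℝ) m j) := by
      intro m
      rw [← hWW m j, Finset.mul_sum]
      exact Finset.sum_congr rfl fun k _ => by ring
    rw [Finset.sum_congr rfl (fun m _ => h2 m)] at h1
    have h3 : ∑ m, (∑ a, D a a m) * (-(1 : Matrix (Fin (2*n)) (Fin (2*n)) ℝ) m j)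
        = -(∑ a, D a a j) := by
      simp [Matrix.neg_apply, Matrix.one_apply, mul_ite, Finset.sum_ite_eq']
    rw [h3] at h1
    linarith
  -- final computation
  intro j
  have hfin : ∑ l, pder l (fun y => J y j l) x₀ = ∑ l, -D l l j :=
    Finset.sum_congr rfl fun l _ => by rw [hDJ l j l, hDanti l l j]
  rw [hfin, Finset.sum_neg_distrib, hU j, neg_zero]
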